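/- Let X be a compact Hausdorff space and A a subset of C(X) that is norm-bounded and compact in the topology of pointwise convergence (i.e., A is a pointwise-compact subset of C(X)). Then A is compact in the weak topology of the Banach space C(X). -/

import Mathlib

open Filter Topology MeasureTheory Set
open scoped ENNReal NNReal

set_option linter.unusedSectionVars false
set_option linter.unusedVariables false
set_option maxHeartbeats 1000000

noncomputable section GrothAux

variable {X : Type*} [TopologicalSpace X] [CompactSpace X] [T2Space X]

namespace Groth

noncomputable def qv (φ : C(X, ℝ) →L[ℝ] ℝ) (f : C(X, ℝ)) : ℝ :=
  sSup ((fun h : C(X, ℝ) => |φ h|) '' {h | ∀ x, |h x| ≤ |f x|})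

variable (φ : C(X, ℝ) →L[ℝ] ℝ) (f g : C(X, ℝ))

theorem qv_set_nonempty : ((fun h : C(X, ℝ) => |φ h|) '' {h | ∀ x, |h x| ≤ |f x|}).Nonempty :=
  ⟨|φ 0|, ⟨0, fun x => by simp [abs_nonneg], rfl⟩⟩

theorem qv_set_bddAbove :
    BddAbove ((fun h : C(X, ℝ) => |φ h|) '' {h | ∀ x, |h x| ≤ |f x|}) := by
  refine ⟨‖φ‖ * ‖f‖, ?_⟩
  rintro y ⟨h, hh, rfl⟩
  calc |φ h| ≤ ‖φ‖ * ‖h‖ := φ.le_opNorm h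
    _ ≤ ‖φ‖ * ‖f‖ := by
        refine mul_le_mul_of_nonneg_left ?_ (norm_nonneg φ)
        refine ContinuousMap.norm_le _ (norm_nonneg f) |>.2 fun x => ?_
        exact le_trans (hh x) (ContinuousMap.norm_coe_le_norm f x)

theorem le_qv {h : C(X, ℝ)} (hh : ∀ x, |h x| ≤ |f x|) : |φ h| ≤ qv φ f :=
  le_csSup (qv_set_bddAbove φ f) ⟨h, hh, rfl⟩

theorem abs_apply_le_qv : |φ f| ≤ qv φ f := le_qv φ f fun _ => le_rfl

theorem qv_nonneg : 0 ≤ qv φ f := by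
  have : |φ (0 : C(X, ℝ))| ≤ qv φ f := le_qv φ f (fun x => by simp [abs_nonneg])
  simpa using le_trans (abs_nonneg _) this

theorem qv_le {c : ℝ} (hc : ∀ h : C(X, ℝ), (∀ x, |h x| ≤ |f x|) → |φ h| ≤ c) : qv φ f ≤ c := by
  refine csSup_le (qv_set_nonempty φ f) ?_
  rintro y ⟨h, hh, rfl⟩
  exact hc h hh

theorem qv_mono (hfg : ∀ x, |f x| ≤ |g x|) : qv φ f ≤ qv φ g :=
  qv_le φ f fun h hh => le_qv φ g fun x => (hh x).trans (hfg x)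

theorem qv_le_norm : qv φ f ≤ ‖φ‖ * ‖f‖ := by
  refine qv_le φ f fun h hh => ?_
  calc |φ h| ≤ ‖φ‖ * ‖h‖ := φ.le_opNorm h
    _ ≤ ‖φ‖ * ‖f‖ := by
        refine mul_le_mul_of_nonneg_left ?_ (norm_nonneg φ)
        refine ContinuousMap.norm_le _ (norm_nonneg f) |>.2 fun x => ?_
        exact le_trans (hh x) (ContinuousMap.norm_coe_le_norm f x)

/-- clamping lemma for reals -/
theorem clamp_abs {a b c : ℝ} (hb : 0 ≤ b) (hc : 0 ≤ c) (h : |a| ≤ b + c) :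
    |max (min a b) (-b)| ≤ b ∧ |a - max (min a b) (-b)| ≤ c := by
  rcases le_total a b with hab | hab
  · rcases le_total (-b) a with hba | hba
    · rw [min_eq_left hab, max_eq_left hba]
      constructor
      · rw [abs_le]; exact ⟨hba, hab⟩
      · simpa using hc
    · rw [max_eq_right]
      constructor
      · rw [abs_neg, abs_of_nonneg hb]
      · have h1 : -(b + c) ≤ a := neg_le_of_abs_le h
        rw [abs_le]
        constructor <;> nlinarith
      · exact le_trans (min_le_left a b) hba
  · rw [min_eq_right hab, max_eq_left (le_trans (neg_nonpos_of_nonneg hb) hb)]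
    have h1 : a ≤ b + c := le_of_abs_le h
    constructor
    · rw [abs_of_nonneg hb]
    · rw [abs_le]; constructor <;> nlinarith

theorem qv_add (hf : ∀ x, 0 ≤ f x) (hg : ∀ x, 0 ≤ g x) :
    qv φ (f + g) = qv φ f + qv φ g := by
  apply le_antisymm
  · refine qv_le φ (f + g) fun h hh => ?_
    set h₁ : C(X, ℝ) := ⟨fun x => max (min (h x) (f x)) (-(f x)), by
      apply Continuous.max (Continuous.min h.continuous f.continuous)
        (f.continuous.neg)⟩ with hdef
    have key : ∀ x, |h₁ x| ≤ f x ∧ |h x - h₁ x| ≤ g x := by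
      intro x
      have hx : |h x| ≤ f x + g x := by
        have := hh x
        rwa [ContinuousMap.add_apply, abs_of_nonneg (add_nonneg (hf x) (hg x))] at this
      have := clamp_abs (hf x) (hg x) hx
      simpa [hdef] using this
    have e1 : |φ h₁| ≤ qv φ f := le_qv φ f fun x => by
      simpa [abs_of_nonneg (hf x)] using (key x).1
    have e2 : |φ (h - h₁)| ≤ qv φ g := le_qv φ g fun x => by
      simpa [abs_of_nonneg (hg x)] using (key x).2
    calc |φ h| = |φ (h₁ + (h - h₁))| := by ring_nf
      _ ≤ |φ h₁| + |φ (h - h₁)| := by rw [map_add]; exact abs_add_le _ _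
      _ ≤ qv φ f + qv φ g := add_le_add e1 e2
  · rw [← sub_nonneg]
    have step : ∀ h₁ h₂ : C(X, ℝ), (∀ x, |h₁ x| ≤ |f x|) → (∀ x, |h₂ x| ≤ |g x|) →
        |φ h₁| + |φ h₂| ≤ qv φ (f + g) := by
      intro h₁ h₂ hh₁ hh₂
      set e₁ : ℝ := if 0 ≤ φ h₁ then 1 else -1 with he₁
      set e₂ : ℝ := if 0 ≤ φ h₂ then 1 else -1 with he₂
      have k₁ : e₁ * φ h₁ = |φ h₁| := by
        rcases le_or_gt 0 (φ h₁) with h | h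
        · simp [he₁, h, abs_of_nonneg h]
        · simp [he₁, not_le.2 h, abs_of_neg h]
      have k₂ : e₂ * φ h₂ = |φ h₂| := by
        rcases le_or_gt 0 (φ h₂) with h | h
        · simp [he₂, h, abs_of_nonneg h]
        · simp [he₂, not_le.2 h, abs_of_neg h]
      have habs₁ : |e₁| = 1 := by rcases le_or_gt 0 (φ h₁) with h | h <;> simp [he₁, h, not_le.2]
      have habs₂ : |e₂| = 1 := by rcases le_or_gt 0 (φ h₂) with h | h <;> simp [he₂, h, not_le.2]
      have : |φ (e₁ • h₁ + e₂ • h₂)| ≤ qv φ (f + g) := by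
        refine le_qv φ (f + g) fun x => ?_
        have : |e₁ * h₁ x + e₂ * h₂ x| ≤ |e₁| * |h₁ x| + |e₂| * |h₂ x| := by
          refine le_trans (abs_add_le _ _) ?_
          rw [abs_mul, abs_mul]
        rw [habs₁, habs₂, one_mul, one_mul] at this
        calc |(e₁ • h₁ + e₂ • h₂) x| = |e₁ * h₁ x + e₂ * h₂ x| := by
              simp [ContinuousMap.add_apply, ContinuousMap.smul_apply, smul_eq_mul]
          _ ≤ |h₁ x| + |h₂ x| := this
          _ ≤ |f x| + |g x| := add_le_add (hh₁ x) (hh₂ x)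
          _ = |(f + g) x| := by
              simp only [ContinuousMap.add_apply]
              rw [abs_of_nonneg (hf x), abs_of_nonneg (hg x),
                abs_of_nonneg (add_nonneg (hf x) (hg x))]
      calc |φ h₁| + |φ h₂| = e₁ * φ h₁ + e₂ * φ h₂ := by rw [k₁, k₂]
        _ = φ (e₁ • h₁ + e₂ • h₂) := by
            rw [map_add, φ.map_smul, φ.map_smul]; simp [smul_eq_mul]
        _ ≤ |φ (e₁ • h₁ + e₂ • h₂)| := le_abs_self _
        _ ≤ qv φ (f + g) := this
    have h1 : qv φ f ≤ qv φ (f + g) - qv φ g := by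
      refine qv_le φ f fun h₁ hh₁ => ?_
      rw [le_sub_iff_add_le]
      have h2 : qv φ g ≤ qv φ (f + g) - |φ h₁| := by
        refine qv_le φ g fun h₂ hh₂ => ?_
        rw [le_sub_iff_add_le, add_comm]
        exact step h₁ h₂ hh₁ hh₂
      linarith
    linarith

theorem qv_smul {c : ℝ} (hc : 0 < c) : qv φ (c • f) = c * qv φ f := by
  apply le_antisymm
  · refine qv_le φ (c • f) fun h hh => ?_
    have : |φ (c⁻¹ • h)| ≤ qv φ f := by
      refine le_qv φ f fun x => ?_
      have := hh x
      simp only [ContinuousMap.smul_apply, smul_eq_mul, abs_mul,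
        abs_of_pos hc, abs_of_pos (inv_pos.2 hc)] at this ⊢
      rw [inv_mul_le_iff₀ hc]
      exact this
    have heq : φ h = c * φ (c⁻¹ • h) := by
      rw [φ.map_smul, smul_eq_mul, ← mul_assoc, mul_inv_cancel₀ (ne_of_gt hc), one_mul]
    rw [heq, abs_mul, abs_of_pos hc]
    exact mul_le_mul_of_nonneg_left this (le_of_lt hc)
  · rw [mul_comm, ← le_div_iff₀ hc]
    refine qv_le φ f fun h hh => ?_
    rw [le_div_iff₀ hc, mul_comm]
    have : |φ (c • h)| ≤ qv φ (c • f) := by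
      refine le_qv φ (c • f) fun x => ?_
      simp only [ContinuousMap.smul_apply, smul_eq_mul, abs_mul]
      exact mul_le_mul_of_nonneg_left (hh x) (abs_nonneg c)
    rw [φ.map_smul, smul_eq_mul, abs_mul, abs_of_pos hc] at this
    exact this

end Groth

end GrothAux


noncomputable section GrothContent

variable {X : Type*} [TopologicalSpace X] [CompactSpace X] [T2Space X]

namespace Groth

variable (φ : C(X, ℝ) →L[ℝ] ℝ)

/-- admissible test functions for a set `K` -/
def adm (K : Set X) : Set C(X, ℝ) := {f | (∀ x, 0 ≤ f x) ∧ ∀ x ∈ K, 1 ≤ f x}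

theorem adm_nonempty (K : Set X) : (adm K).Nonempty := by
  refine ⟨ContinuousMap.const X 1, fun x => by simp, fun x _ => by simp⟩

noncomputable def rcAux (K : Set X) : ℝ := sInf (qv φ '' adm K)

theorem rcAux_bddBelow (K : Set X) : BddBelow (qv φ '' adm K) := by
  refine ⟨0, ?_⟩
  rintro y ⟨f, hf, rfl⟩
  exact qv_nonneg φ f

theorem rcAux_nonneg (K : Set X) : 0 ≤ rcAux φ K := by
  refine le_csInf ((adm_nonempty K).image _) ?_
  rintro y ⟨f, hf, rfl⟩
  exact qv_nonneg φ f

theorem rcAux_le {K : Set X} {f : C(X, ℝ)} (hf : f ∈ adm K) : rcAux φ K ≤ qv φ f :=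
  csInf_le (rcAux_bddBelow φ K) ⟨f, hf, rfl⟩

theorem le_rcAux {K : Set X} {c : ℝ} (hc : ∀ f ∈ adm K, c ≤ qv φ f) : c ≤ rcAux φ K :=
  le_csInf ((adm_nonempty K).image _) (by rintro y ⟨f, hf, rfl⟩; exact hc f hf)

theorem rcAux_mono {K₁ K₂ : Set X} (h : K₁ ⊆ K₂) : rcAux φ K₁ ≤ rcAux φ K₂ := by
  refine le_rcAux φ fun f hf => rcAux_le φ ⟨hf.1, fun x hx => hf.2 x (h hx)⟩

theorem rcAux_union_le (K₁ K₂ : Set X) :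
    rcAux φ (K₁ ∪ K₂) ≤ rcAux φ K₁ + rcAux φ K₂ := by
  have key : ∀ f₁ ∈ adm K₁, ∀ f₂ ∈ adm K₂, rcAux φ (K₁ ∪ K₂) ≤ qv φ f₁ + qv φ f₂ := by
    intro f₁ hf₁ f₂ hf₂
    have hadm : f₁ + f₂ ∈ adm (K₁ ∪ K₂) := by
      constructor
      · intro x; simpa using add_nonneg (hf₁.1 x) (hf₂.1 x)
      · rintro x (hx | hx)
        · have := hf₁.2 x hx; have := hf₂.1 x
          simp only [ContinuousMap.add_apply]; linarith
        · have := hf₂.2 x hx; have := hf₁.1 x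
          simp only [ContinuousMap.add_apply]; linarith
    calc rcAux φ (K₁ ∪ K₂) ≤ qv φ (f₁ + f₂) := rcAux_le φ hadm
      _ = qv φ f₁ + qv φ f₂ := qv_add φ f₁ f₂ hf₁.1 hf₂.1
  have h1 : rcAux φ K₁ ≥ rcAux φ (K₁ ∪ K₂) - rcAux φ K₂ := by
    refine le_rcAux φ fun f₁ hf₁ => ?_
    rw [sub_le_iff_le_add]
    have h2 : rcAux φ (K₁ ∪ K₂) - qv φ f₁ ≤ rcAux φ K₂ :=
      le_rcAux φ fun f₂ hf₂ => by
        have := key f₁ hf₁ f₂ hf₂; linarith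
    linarith
  linarith

theorem rcAux_union_disjoint {K₁ K₂ : Set X} (hK₁ : IsClosed K₁) (hK₂ : IsClosed K₂)
    (hd : Disjoint K₁ K₂) : rcAux φ K₁ + rcAux φ K₂ ≤ rcAux φ (K₁ ∪ K₂) := by
  refine le_rcAux φ fun f hf => ?_
  obtain ⟨w, hw0, hw1, hw01⟩ := exists_continuous_zero_one_of_isClosed hK₂ hK₁ hd.symm
  set f₁ : C(X, ℝ) := f * w with hf₁def
  set f₂ : C(X, ℝ) := f * (1 - w) with hf₂def
  have hw0' : ∀ x, 0 ≤ w x := fun x => (hw01 x).1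
  have hw1' : ∀ x, w x ≤ 1 := fun x => (hw01 x).2
  have hadm₁ : f₁ ∈ adm K₁ := by
    constructor
    · intro x
      simp only [hf₁def, ContinuousMap.mul_apply]
      exact mul_nonneg (hf.1 x) (hw0' x)
    · intro x hx
      have : w x = 1 := hw1 hx
      simp only [hf₁def, ContinuousMap.mul_apply, this, mul_one]
      exact hf.2 x (Or.inl hx)
  have hadm₂ : f₂ ∈ adm K₂ := by
    constructor
    · intro x
      simp only [hf₂def, ContinuousMap.mul_apply, ContinuousMap.sub_apply,
        ContinuousMap.one_apply]
      exact mul_nonneg (hf.1 x) (by linarith [hw1' x])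
    · intro x hx
      have : w x = 0 := hw0 hx
      simp only [hf₂def, ContinuousMap.mul_apply, ContinuousMap.sub_apply,
        ContinuousMap.one_apply, this]
      simpa using hf.2 x (Or.inr hx)
  have hsum : f₁ + f₂ = f := by
    ext x
    simp only [hf₁def, hf₂def, ContinuousMap.add_apply, ContinuousMap.mul_apply,
      ContinuousMap.sub_apply, ContinuousMap.one_apply]
    ring
  calc rcAux φ K₁ + rcAux φ K₂ ≤ qv φ f₁ + qv φ f₂ :=
        add_le_add (rcAux_le φ hadm₁) (rcAux_le φ hadm₂)
    _ = qv φ (f₁ + f₂) := (qv_add φ f₁ f₂ hadm₁.1 (fun x => by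
        simp only [hf₂def, ContinuousMap.mul_apply, ContinuousMap.sub_apply,
          ContinuousMap.one_apply]
        exact mul_nonneg (hf.1 x) (by linarith [hw1' x]))).symm
    _ = qv φ f := by rw [hsum]

/-- The content associated to `φ`'s variation. -/
noncomputable def rcContent : Content X where
  toFun := fun K => Real.toNNReal (rcAux φ K)
  mono' := fun K₁ K₂ h => Real.toNNReal_le_toNNReal (rcAux_mono φ h)
  sup_disjoint' := by
    intro K₁ K₂ hd h₁ h₂
    have hle := rcAux_union_le φ (K₁ : Set X) K₂
    have hge := rcAux_union_disjoint φ h₁ h₂ hd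
    have : rcAux φ ((K₁ : Set X) ∪ K₂) = rcAux φ K₁ + rcAux φ K₂ := le_antisymm hle hge
    show (rcAux φ ((K₁ ⊔ K₂ : TopologicalSpace.Compacts X) : Set X)).toNNReal
        = (rcAux φ (K₁ : Set X)).toNNReal + (rcAux φ (K₂ : Set X)).toNNReal
    have hc : ((K₁ ⊔ K₂ : TopologicalSpace.Compacts X) : Set X) = (K₁ : Set X) ∪ K₂ := rfl
    rw [hc, this, Real.toNNReal_add (rcAux_nonneg φ _) (rcAux_nonneg φ _)]
  sup_le' := by
    intro K₁ K₂
    have hle := rcAux_union_le φ (K₁ : Set X) K₂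
    have hc : ((K₁ ⊔ K₂ : TopologicalSpace.Compacts X) : Set X) = (K₁ : Set X) ∪ K₂ := rfl
    show (rcAux φ ((K₁ ⊔ K₂ : TopologicalSpace.Compacts X) : Set X)).toNNReal
        ≤ (rcAux φ (K₁ : Set X)).toNNReal + (rcAux φ (K₂ : Set X)).toNNReal
    calc Real.toNNReal (rcAux φ ((K₁ ⊔ K₂ : TopologicalSpace.Compacts X) : Set X))
        ≤ Real.toNNReal (rcAux φ (K₁ : Set X) + rcAux φ (K₂ : Set X)) := by
          exact Real.toNNReal_le_toNNReal (by rw [hc]; exact hle)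
      _ ≤ _ := Real.toNNReal_add_le

variable [MeasurableSpace X] [BorelSpace X]

/-- The dominating measure for `φ`. -/
noncomputable def gMeasure : Measure X := (rcContent φ).measure

theorem gMeasure_univ_le : gMeasure φ Set.univ ≤ ((rcContent φ).toFun ⊤ : ℝ≥0∞) := by
  have h1 : gMeasure φ Set.univ = (rcContent φ).outerMeasure Set.univ :=
    (rcContent φ).measure_apply MeasurableSet.univ
  rw [h1, (rcContent φ).outerMeasure_of_isOpen Set.univ isOpen_univ]
  exact le_trans ((rcContent φ).innerContent_le ⟨Set.univ, isOpen_univ⟩ ⊤ (by simp)) le_rfl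

instance gMeasure_finite : IsFiniteMeasure (gMeasure φ) := by
  constructor
  exact lt_of_le_of_lt (gMeasure_univ_le φ) ENNReal.coe_lt_top

theorem measure_open_ne_top {U : Set X} : gMeasure φ U ≠ ⊤ := measure_ne_top _ U

/-- Lemma A: variation of small bump dominated by measure of open set. -/
theorem qv_le_measure {U : Set X} (hU : IsOpen U) {h : C(X, ℝ)} {δ : ℝ} (hδ : 0 < δ)
    (h0 : ∀ x, 0 ≤ h x) (hle : ∀ x, h x ≤ δ) (hsupp : tsupport (⇑h) ⊆ U) :
    qv φ h ≤ δ * (gMeasure φ U).toReal := by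
  set K : Set X := tsupport (⇑h) with hK
  have hKc : IsCompact K := (isClosed_tsupport _).isCompact
  -- Step 1 : qv φ h ≤ δ * rcAux φ K
  have step1 : qv φ h ≤ δ * rcAux φ K := by
    have : qv φ h / δ ≤ rcAux φ K := by
      refine le_rcAux φ fun f hf => ?_
      rw [div_le_iff₀ hδ, mul_comm]
      have hpt : ∀ x, |h x| ≤ |(δ • f) x| := by
        intro x
        rw [abs_of_nonneg (h0 x), ContinuousMap.smul_apply, smul_eq_mul,
          abs_of_nonneg (mul_nonneg hδ.le (hf.1 x))]
        by_cases hx : x ∈ K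
        · calc h x ≤ δ := hle x
            _ ≤ δ * f x := by nlinarith [hf.2 x hx]
        · have : h x = 0 := image_eq_zero_of_notMem_tsupport hx
          rw [this]; exact mul_nonneg hδ.le (hf.1 x)
      calc qv φ h ≤ qv φ (δ • f) := qv_mono φ h _ hpt
        _ = δ * qv φ f := qv_smul φ f hδ
    calc qv φ h = δ * (qv φ h / δ) := by field_simp
      _ ≤ δ * rcAux φ K := by nlinarith [rcAux_nonneg φ K, this, qv_nonneg φ h]
  -- Step 2 : rcAux φ K ≤ (gMeasure φ U).toReal
  have step2 : rcAux φ K ≤ (gMeasure φ U).toReal := by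
    set KK : TopologicalSpace.Compacts X := ⟨K, hKc⟩ with hKK
    have h1 : (((rcContent φ).toFun KK : ℝ≥0) : ℝ≥0∞) ≤ gMeasure φ U := by
      have h2 : gMeasure φ U = (rcContent φ).outerMeasure U :=
        (rcContent φ).measure_apply hU.measurableSet
      rw [h2, (rcContent φ).outerMeasure_of_isOpen U hU]
      exact (rcContent φ).le_innerContent KK ⟨U, hU⟩ hsupp
    have h3 : (((rcContent φ).toFun KK : ℝ≥0) : ℝ) ≤ (gMeasure φ U).toReal := by
      have := ENNReal.toReal_mono (measure_ne_top _ U) h1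
      simpa only [ENNReal.coe_toReal] using this
    calc rcAux φ K = (((rcContent φ).toFun KK : ℝ≥0) : ℝ) := by
          simp [rcContent, hKK, Real.coe_toNNReal _ (rcAux_nonneg φ K)]
      _ ≤ (gMeasure φ U).toReal := h3
  exact le_trans step1 (mul_le_mul_of_nonneg_left step2 hδ.le)

end Groth

end GrothContent
noncomputable section GrothIntegral

open Filter Topology MeasureTheory Set
open scoped ENNReal NNReal

namespace Groth

variable {X : Type*} [TopologicalSpace X] [CompactSpace X] [T2Space X]
variable [MeasurableSpace X] [BorelSpace X]
variable (φ : C(X, ℝ) →L[ℝ] ℝ)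

theorem qv_zero : qv φ (0 : C(X, ℝ)) = 0 :=
  le_antisymm (by simpa using qv_le_norm φ 0) (qv_nonneg φ 0)

theorem qv_sum {ι : Type*} (s : Finset ι) (u : ι → C(X, ℝ)) (hu : ∀ i, ∀ x, 0 ≤ u i x) :
    qv φ (∑ i ∈ s, u i) = ∑ i ∈ s, qv φ (u i) := by
  classical
  induction s using Finset.cons_induction with
  | empty => simpa using qv_zero φ
  | cons a s ha ih =>
      rw [Finset.sum_cons, Finset.sum_cons, ← ih,
        qv_add φ (u a) (∑ i ∈ s, u i) (hu a) (fun x => by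
          simp only [ContinuousMap.coe_sum, Finset.sum_apply]
          exact Finset.sum_nonneg fun i _ => hu i x)]

theorem integrable_cm (g : C(X, ℝ)) : Integrable (fun x => g x) (gMeasure φ) := by
  refine Integrable.mono' (integrable_const ‖g‖)
    g.continuous.measurable.aestronglyMeasurable ?_
  exact ae_of_all _ fun x => g.norm_coe_le_norm x

/-- Lemma B : the variation is dominated by the integral against `gMeasure`. -/
theorem qv_le_integral (g : C(X, ℝ)) (hg : ∀ x, 0 ≤ g x) :
    qv φ g ≤ ∫ x, g x ∂(gMeasure φ) := by
  set μ := gMeasure φ with hμ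
  set C : ℝ := (μ Set.univ).toReal with hC
  have hC0 : 0 ≤ C := ENNReal.toReal_nonneg
  set M : ℝ := ‖g‖ + 1 with hM
  have hM0 : 0 < M := by positivity
  have hgM : ∀ x, g x < M := fun x =>
    lt_of_le_of_lt (le_trans (le_abs_self _) (g.norm_coe_le_norm x)) (by simp [hM])
  have key : ∀ n : ℕ, 1 ≤ n →
      qv φ g ≤ (∫ x, g x ∂μ) + 3 / 2 * (M / n) * (C + 1) := by
    intro n hn
    set δ : ℝ := M / n with hδdef
    have hδ : 0 < δ := by positivity
    -- the layers
    set u : ℕ → C(X, ℝ) := fun i =>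
      ⟨fun x => min (g x) ((i + 1 : ℕ) * δ) - min (g x) (i * δ), by
        refine Continuous.sub ?_ ?_ <;> exact Continuous.min g.continuous continuous_const⟩
      with hu
    have hu_apply : ∀ (i : ℕ) (x : X), u i x = min (g x) ((i + 1 : ℕ) * δ) - min (g x) (i * δ) :=
      fun i x => rfl
    have hmono : ∀ i : ℕ, (i : ℝ) * δ ≤ ((i + 1 : ℕ) : ℝ) * δ := by
      intro i
      have : (i : ℝ) ≤ ((i + 1 : ℕ) : ℝ) := by push_cast; linarith
      nlinarith
    have hu_nonneg : ∀ (i : ℕ) (x : X), 0 ≤ u i x := by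
      intro i x
      rw [hu_apply, sub_nonneg]
      exact min_le_min le_rfl (hmono i)
    have hu_le : ∀ (i : ℕ) (x : X), u i x ≤ δ := by
      intro i x
      rw [hu_apply]
      rcases le_total (g x) ((i : ℝ) * δ) with h | h
      · rw [min_eq_left (h.trans (hmono i)), min_eq_left h]; simpa using hδ.le
      · rw [min_eq_right h]
        have : min (g x) (((i + 1 : ℕ) : ℝ) * δ) ≤ ((i + 1 : ℕ) : ℝ) * δ := min_le_right _ _
        push_cast at this ⊢
        nlinarith [this]
    have hu_zero : ∀ (i : ℕ) (x : X), g x ≤ (i : ℝ) * δ → u i x = 0 := by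
      intro i x h
      rw [hu_apply, min_eq_left (h.trans (hmono i)), min_eq_left h, sub_self]
    -- telescoping sum
    have hsum : ∑ i ∈ Finset.range n, u i = g := by
      ext x
      rw [ContinuousMap.coe_sum]
      have : (∑ i ∈ Finset.range n, u i) x = ∑ i ∈ Finset.range n, u i x := by
        simp [ContinuousMap.coe_sum]
      calc (∑ i ∈ Finset.range n, fun x => u i x) x
          = ∑ i ∈ Finset.range n, u i x := by simp
        _ = ∑ i ∈ Finset.range n,
            ((fun j : ℕ => min (g x) (j * δ)) (i + 1) - (fun j : ℕ => min (g x) (j * δ)) i) := by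
            refine Finset.sum_congr rfl fun i _ => ?_
            rw [hu_apply]
        _ = min (g x) (n * δ) - min (g x) ((0 : ℕ) * δ) := by
            rw [Finset.sum_range_sub (fun j : ℕ => min (g x) (j * δ))]
        _ = g x := by
            have h1 : g x ≤ (n : ℝ) * δ := by
              have : (n : ℝ) * δ = M := by
                rw [hδdef]; field_simp
              rw [this]
              exact (hgM x).le
            rw [min_eq_left h1]
            simp [hg x]
    -- open sets
    set V : ℕ → Set X := fun i => {x | ((i : ℝ) - 1 / 2) * δ < g x} with hV
    have hVopen : ∀ (i : ℕ), IsOpen (V i) := fun i =>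
      isOpen_lt continuous_const g.continuous
    have hsupp : ∀ (i : ℕ), tsupport (⇑(u i)) ⊆ V i := by
      intro i
      have h1 : {x | u i x ≠ 0} ⊆ {x | (i : ℝ) * δ ≤ g x} := by
        intro x hx
        by_contra hcon
        exact hx (hu_zero i x (le_of_not_ge fun h => hcon (by simpa using h)))
      have h2 : IsClosed {x | (i : ℝ) * δ ≤ g x} :=
        isClosed_le continuous_const g.continuous
      have h3 : tsupport (⇑(u i)) ⊆ {x | (i : ℝ) * δ ≤ g x} :=
        closure_minimal (by intro x hx; exact h1 hx) h2
      refine h3.trans fun x hx => ?_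
      simp only [hV, Set.mem_setOf_eq] at hx ⊢
      nlinarith [hx]
    have hlayer : ∀ (i : ℕ), qv φ (u i) ≤ δ * (μ (V i)).toReal := fun i =>
      qv_le_measure φ (hVopen i) hδ (hu_nonneg i) (hu_le i) (hsupp i)
    -- integral comparison
    have hind : ∀ (i : ℕ), Integrable ((V i).indicator fun _ => δ) μ :=
      fun i => (integrable_const δ).indicator (hVopen i).measurableSet
    have hptwise : ∀ x, (∑ i ∈ Finset.range n, (V i).indicator (fun _ => δ) x)
        ≤ g x + 3 / 2 * δ := by
      intro x
      classical
      have hfil : ∑ i ∈ Finset.range n, (V i).indicator (fun _ => δ) x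
          = ∑ i ∈ (Finset.range n).filter (fun i => x ∈ V i), δ := by
        rw [Finset.sum_filter]
        refine Finset.sum_congr rfl fun i _ => ?_
        by_cases h : x ∈ V i <;> simp [Set.indicator_apply, h]
      set m : ℕ := ⌈g x / δ + 1 / 2⌉₊ with hm
      have hsub : (Finset.range n).filter (fun i => x ∈ V i) ⊆ Finset.range m := by
        intro i hi
        simp only [Finset.mem_filter, Finset.mem_range] at hi ⊢
        have hx := hi.2
        simp only [hV, Set.mem_setOf_eq] at hx
        rw [hm, Nat.lt_ceil]
        have h2 : (i : ℝ) - 1 / 2 < g x / δ := (lt_div_iff₀ hδ).mpr (by nlinarith [hx])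
        linarith
      have hcard : ((Finset.range n).filter (fun i => x ∈ V i)).card ≤ m :=
        le_trans (Finset.card_le_card hsub) (by simp)
      have hmlt : (m : ℝ) < g x / δ + 1 / 2 + 1 := by
        rw [hm]
        have h3 : 0 ≤ g x / δ := div_nonneg (hg x) hδ.le
        exact Nat.ceil_lt_add_one (by linarith)
      calc ∑ i ∈ Finset.range n, (V i).indicator (fun _ => δ) x
          = ((Finset.range n).filter (fun i => x ∈ V i)).card * δ := by
            rw [hfil, Finset.sum_const, nsmul_eq_mul]
        _ ≤ m * δ := by
            have : (((Finset.range n).filter (fun i => x ∈ V i)).card : ℝ) ≤ (m : ℝ) := by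
              exact_mod_cast hcard
            nlinarith
        _ ≤ (g x / δ + 3 / 2) * δ := by nlinarith
        _ = g x + 3 / 2 * δ := by field_simp
    have hmeasle : ∑ i ∈ Finset.range n, δ * (μ (V i)).toReal
        ≤ (∫ x, g x ∂μ) + 3 / 2 * δ * C := by
      have h1 : ∑ i ∈ Finset.range n, δ * (μ (V i)).toReal
          = ∫ x, (∑ i ∈ Finset.range n, (V i).indicator (fun _ => δ) x) ∂μ := by
        rw [integral_finset_sum _ (fun i _ => hind i)]
        refine Finset.sum_congr rfl fun i _ => ?_
        rw [integral_indicator_const δ (hVopen i).measurableSet]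
        simp [mul_comm, Measure.real]
      have h2 : ∫ x, (∑ i ∈ Finset.range n, (V i).indicator (fun _ => δ) x) ∂μ
          ≤ ∫ x, (g x + 3 / 2 * δ) ∂μ := by
        refine integral_mono (integrable_finset_sum _ (fun i _ => hind i))
          ((integrable_cm φ g).add (integrable_const _)) ?_
        intro x
        exact hptwise x
      have h3 : ∫ x, (g x + 3 / 2 * δ) ∂μ = (∫ x, g x ∂μ) + 3 / 2 * δ * C := by
        rw [integral_add (integrable_cm φ g) (integrable_const _), integral_const]
        simp [hC, smul_eq_mul, Measure.real, hμ]
        ring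
      calc ∑ i ∈ Finset.range n, δ * (μ (V i)).toReal
          = ∫ x, (∑ i ∈ Finset.range n, (V i).indicator (fun _ => δ) x) ∂μ := h1
        _ ≤ ∫ x, (g x + 3 / 2 * δ) ∂μ := h2
        _ = (∫ x, g x ∂μ) + 3 / 2 * δ * C := h3
    calc qv φ g = ∑ i ∈ Finset.range n, qv φ (u i) := by
          rw [← hsum, qv_sum φ _ u hu_nonneg]
      _ ≤ ∑ i ∈ Finset.range n, δ * (μ (V i)).toReal :=
          Finset.sum_le_sum fun i _ => hlayer i
      _ ≤ (∫ x, g x ∂μ) + 3 / 2 * δ * C := hmeasle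
      _ ≤ (∫ x, g x ∂μ) + 3 / 2 * δ * (C + 1) := by nlinarith
  -- take n → ∞
  by_contra hcon
  push_neg at hcon
  set ε : ℝ := qv φ g - ∫ x, g x ∂μ with hε
  have hε0 : 0 < ε := by simp only [hε]; linarith
  obtain ⟨n, hn⟩ := exists_nat_gt (3 / 2 * M * (C + 1) / ε)
  have hn1 : 1 ≤ n := by
    by_contra h
    interval_cases n
    · simp only [Nat.cast_zero] at hn
      have : 0 < 3 / 2 * M * (C + 1) / ε := by positivity
      linarith
  have := key n hn1
  have hnpos : (0 : ℝ) < n := by exact_mod_cast hn1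
  have h1 : 3 / 2 * M * (C + 1) < ε * n := by
    rw [div_lt_iff₀ hε0] at hn
    nlinarith
  have h2 : 3 / 2 * (M / n) * (C + 1) < ε := by
    have heq : 3 / 2 * (M / (n : ℝ)) * (C + 1) = 3 / 2 * M * (C + 1) / (n : ℝ) := by
      field_simp
    rw [heq]
    exact (div_lt_iff₀ hnpos).mpr h1
  simp only [hε] at h2
  linarith

/-- The sequential continuity of `φ` along bounded pointwise convergent sequences. -/
theorem tendsto_apply_of_pointwise (F : ℕ → C(X, ℝ)) (f₀ : C(X, ℝ)) (r : ℝ)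
    (hbF : ∀ k, ‖F k‖ ≤ r) (hb0 : ‖f₀‖ ≤ r)
    (hpt : ∀ x, Tendsto (fun k => F k x) atTop (𝓝 (f₀ x))) :
    Tendsto (fun k => φ (F k)) atTop (𝓝 (φ f₀)) := by
  set μ := gMeasure φ with hμ
  set a : ℕ → C(X, ℝ) := fun k => ⟨fun x => |F k x - f₀ x|, by
    exact Continuous.abs (Continuous.sub (F k).continuous f₀.continuous)⟩ with ha
  have hbound : ∀ k, |φ (F k) - φ f₀| ≤ ∫ x, a k x ∂μ := by
    intro k
    have h1 : |φ (F k) - φ f₀| = |φ (F k - f₀)| := by rw [map_sub]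
    have h2 : |φ (F k - f₀)| ≤ qv φ (F k - f₀) := abs_apply_le_qv φ _
    have h3 : qv φ (F k - f₀) ≤ qv φ (a k) := by
      refine qv_mono φ _ _ fun x => ?_
      simp [ha, ContinuousMap.sub_apply, abs_abs]
    have h4 : qv φ (a k) ≤ ∫ x, a k x ∂μ :=
      qv_le_integral φ (a k) fun x => abs_nonneg _
    linarith
  have hinttendsto : Tendsto (fun k => ∫ x, a k x ∂μ) atTop (𝓝 0) := by
    have h0 : (0 : ℝ) = ∫ x, (0 : ℝ) ∂μ := by simp
    rw [h0]
    refine tendsto_integral_of_dominated_convergence (fun _ => 2 * r)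
      (fun k => (a k).continuous.measurable.aestronglyMeasurable)
      (integrable_const _) (fun k => ae_of_all _ fun x => ?_) (ae_of_all _ fun x => ?_)
    · have h1 : |F k x| ≤ r := le_trans ((F k).norm_coe_le_norm x) (hbF k)
      have h2 : |f₀ x| ≤ r := le_trans (f₀.norm_coe_le_norm x) hb0
      have : |F k x - f₀ x| ≤ 2 * r := by
        calc |F k x - f₀ x| ≤ |F k x| + |f₀ x| := abs_sub _ _
          _ ≤ 2 * r := by linarith
      simpa [ha, abs_abs] using this
    · have : Tendsto (fun k => F k x - f₀ x) atTop (𝓝 0) := by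
        have := (hpt x).sub_const (f₀ x)
        simpa using this
      have habs : Tendsto (fun k => |F k x - f₀ x|) atTop (𝓝 |0|) := this.abs
      simpa [ha] using habs
  have hsq : Tendsto (fun k => |φ (F k) - φ f₀|) atTop (𝓝 0) :=
    squeeze_zero (fun k => abs_nonneg _) hbound hinttendsto
  rw [tendsto_iff_dist_tendsto_zero]
  simpa [Real.dist_eq] using hsq

end Groth

end GrothIntegral
noncomputable section GrothTopology

open Filter Topology MeasureTheory Set

namespace Groth

variable {X : Type*} [TopologicalSpace X] [CompactSpace X] [T2Space X]

theorem mapClusterPt_mem_of_closed {Z : Type*} [TopologicalSpace Z] {u : ℕ → Z} {p : Z}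
    {s : Set Z} (h : MapClusterPt p atTop u) (hu : ∀ k, u k ∈ s) (hs : IsClosed s) : p ∈ s := by
  have h1 : Filter.map u atTop ≤ 𝓟 s := le_principal_iff.2 (mem_map.2 (Filter.univ_mem' hu))
  have h2 : ClusterPt p (𝓟 s) := h.clusterPt.mono h1
  rw [← hs.closure_eq]
  exact mem_closure_iff_clusterPt.2 h2

/-- Two continuous functions which factor through `Ψ` and agree on a set whose `Ψ`-image is
dense agree everywhere. -/
theorem eq_of_fiber_dense {Y : Type*} [TopologicalSpace Y] [T2Space Y]
    {Ψ : X → Y} (hΨ : Continuous Ψ) {g h : C(X, ℝ)}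
    (hg : ∀ x y, Ψ x = Ψ y → g x = g y) (hh : ∀ x y, Ψ x = Ψ y → h x = h y)
    {D : Set X} (hD : ∀ x : X, Ψ x ∈ closure (Ψ '' D))
    (heq : ∀ d ∈ D, g d = h d) (x : X) : g x = h x := by
  set q : X → Set.range Ψ := fun x => ⟨Ψ x, Set.mem_range_self x⟩ with hq
  have hqc : Continuous q := hΨ.subtype_mk _
  have hqs : Function.Surjective q := by rintro ⟨y, x', rfl⟩; exact ⟨x', rfl⟩
  have hquot : IsQuotientMap q := (hqc.isClosedMap).isQuotientMap hqc hqs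
  set gbar : Set.range Ψ → ℝ := fun p => g (Function.surjInv hqs p) with hgbar
  set hbar : Set.range Ψ → ℝ := fun p => h (Function.surjInv hqs p) with hhbar
  have hfib : ∀ z : X, Ψ (Function.surjInv hqs (q z)) = Ψ z := by
    intro z
    have : q (Function.surjInv hqs (q z)) = q z := Function.surjInv_eq hqs (q z)
    exact congrArg Subtype.val this
  have hgq : ∀ z : X, gbar (q z) = g z := fun z => hg _ _ (hfib z)
  have hhq : ∀ z : X, hbar (q z) = h z := fun z => hh _ _ (hfib z)
  have hgc : Continuous gbar := by
    rw [hquot.continuous_iff]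
    have : gbar ∘ q = ⇑g := funext hgq
    rw [this]; exact g.continuous
  have hhc : Continuous hbar := by
    rw [hquot.continuous_iff]
    have : hbar ∘ q = ⇑h := funext hhq
    rw [this]; exact h.continuous
  have hdense : Dense (q '' D) := by
    intro p
    obtain ⟨x', rfl⟩ := hqs p
    rw [closure_subtype]
    have himg : (Subtype.val '' (q '' D)) = Ψ '' D := by
      rw [Set.image_image]
    rw [himg]
    exact hD x'
  have heqon : Set.EqOn gbar hbar (q '' D) := by
    rintro _ ⟨d, hd, rfl⟩
    rw [hgq d, hhq d]
    exact heq d hd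
  have hfin : gbar = hbar := hgc.ext_on hdense hhc heqon
  calc g x = gbar (q x) := (hgq x).symm
    _ = hbar (q x) := by rw [hfin]
    _ = h x := hhq x

/-- Separability: an enumeration of points of `X` whose images under countably many functions
are dense. -/
theorem exists_dense_seq [Nonempty X] (fs : ℕ → C(X, ℝ)) :
    ∃ e : ℕ → X, ∀ (x : X) (m : ℕ) (ε : ℝ), 0 < ε →
      ∃ j : ℕ, ∀ i ≤ m, |fs i (e j) - fs i x| < ε := by
  classical
  set Ψ : X → (ℕ → ℝ) := fun x i => fs i x with hΨ
  have hΨc : Continuous Ψ := continuous_pi fun i => (fs i).continuous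
  haveI : Nonempty (Set.range Ψ) := ⟨⟨Ψ (Classical.arbitrary X), Set.mem_range_self _⟩⟩
  obtain ⟨s, hsc, hsd⟩ := TopologicalSpace.exists_countable_dense (Set.range Ψ)
  have hchoose : ∀ p : Set.range Ψ, ∃ x : X, Ψ x = (p : ℕ → ℝ) := fun p => p.2
  choose w hw using hchoose
  have hsne : s.Nonempty := hsd.nonempty
  have hDc : (w '' s).Countable := hsc.image w
  have hDne : (w '' s).Nonempty := hsne.image w
  obtain ⟨e, he⟩ := hDc.exists_eq_range hDne
  refine ⟨e, fun x m ε hε => ?_⟩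
  set U : Set (ℕ → ℝ) := {y | ∀ i ∈ Finset.range (m + 1), |y i - Ψ x i| < ε} with hU
  have hUopen : IsOpen U := by
    have hrw : U = ⋂ i ∈ Finset.range (m + 1), {y : ℕ → ℝ | |y i - Ψ x i| < ε} := by
      ext y; simp [hU]
    rw [hrw]
    refine isOpen_biInter_finset fun i _ => ?_
    exact isOpen_lt (((continuous_apply i).sub continuous_const).abs) continuous_const
  have hmem : (⟨Ψ x, Set.mem_range_self x⟩ : Set.range Ψ) ∈ closure s := hsd _
  have hU' : IsOpen ((Subtype.val : Set.range Ψ → (ℕ → ℝ)) ⁻¹' U) :=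
    hUopen.preimage continuous_subtype_val
  have hxU : (⟨Ψ x, Set.mem_range_self x⟩ : Set.range Ψ) ∈ Subtype.val ⁻¹' U := by
    simp only [Set.mem_preimage, hU, Set.mem_setOf_eq]
    intro i _
    simpa using hε
  obtain ⟨p, hpU, hps⟩ := mem_closure_iff.1 hmem _ hU' hxU
  have hwp : w p ∈ w '' s := ⟨p, hps, rfl⟩
  rw [he] at hwp
  obtain ⟨j, hj⟩ := hwp
  refine ⟨j, fun i hi => ?_⟩
  have h1 : (p : ℕ → ℝ) ∈ U := hpU
  have h2 : Ψ (w p) = (p : ℕ → ℝ) := hw p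
  have h3 : fs i (e j) = (p : ℕ → ℝ) i := by
    rw [hj]
    exact congrFun h2 i
  rw [h3]
  have := h1 i (Finset.mem_range.2 (Nat.lt_succ_of_le hi))
  exact this

/-- The interleaved recursive construction: a sequence in `S` converging pointwise to `f₀` on a
set `D` which is "dense" with respect to all the functions involved. -/
theorem exists_approx_seq [Nonempty X] (S : Set C(X, ℝ)) (f₀ : C(X, ℝ))
    (hS : ∀ (E : Finset X) (δ : ℝ), 0 < δ → ∃ f, f ∈ S ∧ ∀ x ∈ E, |f x - f₀ x| < δ) :
    ∃ (F : ℕ → C(X, ℝ)) (D : Set X),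
      F 0 = f₀ ∧ (∀ k : ℕ, F (k + 1) ∈ S) ∧
      (∀ d ∈ D, Tendsto (fun k => F k d) atTop (𝓝 (f₀ d))) ∧
      (∀ (x : X) (m : ℕ) (ε : ℝ), 0 < ε → ∃ d ∈ D, ∀ i ≤ m, |F i d - F i x| < ε) := by
  classical
  have hedense : ∀ fs : ℕ → C(X, ℝ), ∃ e : ℕ → X, ∀ (x : X) (m : ℕ) (ε : ℝ), 0 < ε →
      ∃ j : ℕ, ∀ i ≤ m, |fs i (e j) - fs i x| < ε := fun fs => exists_dense_seq fs
  set ed : (ℕ → C(X, ℝ)) → (ℕ → X) := fun fs => (hedense fs).choose with hed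
  have hedspec : ∀ (fs : ℕ → C(X, ℝ)) (x : X) (m : ℕ) (ε : ℝ), 0 < ε →
      ∃ j : ℕ, ∀ i ≤ m, |fs i (ed fs j) - fs i x| < ε := fun fs => (hedense fs).choose_spec
  set merge : (ℕ → X) → (ℕ → X) → (ℕ → X) :=
    fun e₁ e₂ j => if j % 2 = 0 then e₁ (j / 2) else e₂ (j / 2) with hmerge
  have hpos : ∀ k : ℕ, (0 : ℝ) < 1 / (k + 1) := fun k => by positivity
  set Ek : ℕ → (ℕ → X) → Finset X :=
    fun k e => (Finset.range ((k + 1) * 2 ^ (k + 1) + 1)).image e with hEk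
  set pick : ℕ → (ℕ → X) → C(X, ℝ) :=
    fun k e => (hS (Ek k e) (1 / (k + 1)) (hpos k)).choose with hpick
  have hpickspec : ∀ (k : ℕ) (e : ℕ → X),
      pick k e ∈ S ∧ ∀ x ∈ Ek k e, |pick k e x - f₀ x| < 1 / (k + 1) :=
    fun k e => (hS (Ek k e) (1 / (k + 1)) (hpos k)).choose_spec
  set step : ℕ → ((ℕ → C(X, ℝ)) × (ℕ → X)) → ((ℕ → C(X, ℝ)) × (ℕ → X)) := fun k st =>
    (Function.update st.1 (k + 1) (pick k st.2),
      merge st.2 (ed (Function.update st.1 (k + 1) (pick k st.2)))) with hstep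
  set init : (ℕ → C(X, ℝ)) × (ℕ → X) :=
    (fun _ => f₀, merge (ed fun _ => f₀) (ed fun _ => f₀)) with hinit
  set s : ℕ → ((ℕ → C(X, ℝ)) × (ℕ → X)) := fun n => Nat.rec init step n with hs
  have hsrec : ∀ k, s (k + 1) = step k (s k) := fun k => rfl
  set F : ℕ → C(X, ℝ) := fun k => (s k).1 k with hF
  set D : Set X := ⋃ k, Set.range (s k).2 with hD
  -- stabilization
  have hstab : ∀ k i, i ≤ k → (s k).1 i = F i := by
    intro k
    induction k with
    | zero =>
        intro i hi
        rw [Nat.le_zero] at hi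
        subst hi; rfl
    | succ k ih =>
        intro i hi
        rcases Nat.eq_or_lt_of_le hi with hcase | hcase
        · subst hcase; rfl
        · have hik : i ≤ k := Nat.lt_succ_iff.1 hcase
          have hupd : (s (k + 1)).1 i = (s k).1 i := by
            rw [hsrec k]
            exact Function.update_of_ne (by omega) _ _
          rw [hupd, ih i hik]
  have hF0 : F 0 = f₀ := rfl
  have hFup : ∀ k : ℕ, F (k + 1) = pick k (s k).2 := by
    intro k
    show (s (k + 1)).1 (k + 1) = _
    rw [hsrec k]
    exact Function.update_self _ _ _
  have hFS : ∀ k : ℕ, F (k + 1) ∈ S := fun k => by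
    rw [hFup k]; exact (hpickspec k (s k).2).1
  -- closeness
  have hclose : ∀ k j, j ≤ (k + 1) * 2 ^ (k + 1) →
      |F (k + 1) ((s k).2 j) - f₀ ((s k).2 j)| < 1 / (k + 1) := by
    intro k j hj
    rw [hFup k]
    refine (hpickspec k (s k).2).2 _ ?_
    exact Finset.mem_image.2 ⟨j, Finset.mem_range.2 (Nat.lt_succ_of_le hj), rfl⟩
  -- merge position facts
  have hdouble : ∀ k j, (s (k + 1)).2 (2 * j) = (s k).2 j := by
    intro k j
    rw [hsrec k]
    show merge (s k).2 _ (2 * j) = (s k).2 j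
    simp only [hmerge]
    have h1 : (2 * j) % 2 = 0 := by omega
    have h2 : (2 * j) / 2 = j := by omega
    rw [if_pos h1, h2]
  have hpow : ∀ (k₀ j k : ℕ), k₀ ≤ k → (s k).2 (2 ^ (k - k₀) * j) = (s k₀).2 j := by
    intro k₀ j k
    induction k with
    | zero =>
        intro hk
        have : k₀ = 0 := Nat.le_zero.1 hk
        subst this
        simp
    | succ k ih =>
        intro hk
        rcases Nat.eq_or_lt_of_le hk with hcase | hcase
        · subst hcase
          simp
        · have hk' : k₀ ≤ k := Nat.lt_succ_iff.1 hcase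
          have harith : 2 ^ (k + 1 - k₀) * j = 2 * (2 ^ (k - k₀) * j) := by
            have : k + 1 - k₀ = (k - k₀) + 1 := by omega
            rw [this, pow_succ]
            ring
          rw [harith, hdouble k _, ih hk']
  have hodd : ∀ k j, (s k).2 (2 * j + 1) = ed ((s k).1) j := by
    intro k j
    have h1 : (2 * j + 1) % 2 ≠ 0 := by omega
    have h2 : (2 * j + 1) / 2 = j := by omega
    cases k with
    | zero =>
        show merge (ed fun _ => f₀) (ed fun _ => f₀) (2 * j + 1) = _
        simp only [hmerge]
        rw [if_neg h1, h2]
    | succ k =>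
        rw [hsrec k]
        show merge (s k).2 (ed (Function.update (s k).1 (k + 1) (pick k (s k).2))) (2 * j + 1) = _
        simp only [hmerge]
        rw [if_neg h1, h2]
  -- convergence on D
  have hDconv : ∀ d ∈ D, Tendsto (fun k => F k d) atTop (𝓝 (f₀ d)) := by
    intro d hd
    rw [hD, Set.mem_iUnion] at hd
    obtain ⟨k₀, j₀, hd'⟩ := hd
    have key : ∀ k, k₀ ≤ k → j₀ ≤ k + 1 → |F (k + 1) d - f₀ d| < 1 / (k + 1) := by
      intro k hk hj
      have hpos' : (s k).2 (2 ^ (k - k₀) * j₀) = d := by rw [hpow k₀ j₀ k hk, hd']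
      have hle : 2 ^ (k - k₀) * j₀ ≤ (k + 1) * 2 ^ (k + 1) := by
        calc 2 ^ (k - k₀) * j₀ ≤ 2 ^ (k + 1) * (k + 1) := by
              refine Nat.mul_le_mul ?_ hj
              exact Nat.pow_le_pow_right (by omega) (by omega)
          _ = (k + 1) * 2 ^ (k + 1) := by ring
      have := hclose k _ hle
      rwa [hpos'] at this
    rw [Metric.tendsto_atTop]
    intro ε hε
    refine ⟨max (max k₀ j₀) ⌈1 / ε⌉₊ + 1, fun k hk => ?_⟩
    obtain ⟨m, rfl⟩ : ∃ m, k = m + 1 := ⟨k - 1, by omega⟩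
    have hm1 : k₀ ≤ m := by omega
    have hm2 : j₀ ≤ m + 1 := by omega
    have h1 := key m hm1 hm2
    have h2 : 1 / ((m : ℝ) + 1) ≤ ε := by
      have hceil : (1 : ℝ) / ε ≤ ⌈1 / ε⌉₊ := Nat.le_ceil _
      have hmge : (⌈1 / ε⌉₊ : ℝ) + 1 ≤ (m : ℝ) + 1 := by
        have : ⌈1 / ε⌉₊ ≤ m := by omega
        have := (Nat.cast_le (α := ℝ)).2 this
        linarith
      have hgt : (1 : ℝ) / ε < (m : ℝ) + 1 := by linarith
      rw [div_le_iff₀ (by positivity)]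
      rw [div_lt_iff₀ hε] at hgt
      nlinarith
    rw [Real.dist_eq]
    calc |F (m + 1) d - f₀ d| < 1 / (m + 1) := by exact_mod_cast h1
      _ ≤ ε := h2
  -- density
  have hDdense : ∀ (x : X) (m : ℕ) (ε : ℝ), 0 < ε →
      ∃ d ∈ D, ∀ i ≤ m, |F i d - F i x| < ε := by
    intro x m ε hε
    obtain ⟨j, hj⟩ := hedspec ((s m).1) x m ε hε
    refine ⟨ed ((s m).1) j, ?_, fun i hi => ?_⟩
    · rw [hD, Set.mem_iUnion]
      exact ⟨m, 2 * j + 1, hodd m j⟩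
    · have := hj i hi
      rwa [hstab m i hi] at this
  exact ⟨F, D, hF0, hFS, hDconv, hDdense⟩

end Groth

end GrothTopology
open Filter Topology

/-- The identity map from `C(X, ℝ)` to itself equipped with the weak topology. -/
noncomputable def toWeak {X : Type*} [TopologicalSpace X] [CompactSpace X] :
    C(X, ℝ) → WeakSpace ℝ C(X, ℝ) := fun f => f

/-- If `A ⊆ C(X)` is norm-bounded and compact in the topology of pointwise convergence,
then `A` is compact in the weak topology of the Banach space `C(X)`. -/
theorem pointwise_compact_implies_weakly_compact
    {X : Type*} [TopologicalSpace X] [CompactSpace X] [T2Space X]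
    (A : Set C(X, ℝ))
    (hbdd : ∃ r : ℝ, ∀ f ∈ A, ‖f‖ ≤ r)
    (hcomp : IsCompact ((fun f : C(X, ℝ) => (f : X → ℝ)) '' A)) :
    IsCompact (toWeak '' A) := by
  classical
  obtain ⟨r, hr⟩ := hbdd
  rcases isEmpty_or_nonempty X with hXe | hXne
  · refine Set.Subsingleton.isCompact ?_
    rintro w₁ ⟨f₁, _, rfl⟩ w₂ ⟨f₂, _, rfl⟩
    have hf : f₁ = f₂ := ContinuousMap.ext fun x => isEmptyElim x
    rw [hf]
  · letI : MeasurableSpace X := borel X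
    haveI : BorelSpace X := ⟨rfl⟩
    rw [isCompact_iff_ultrafilter_le_nhds]
    intro 𝔉 h𝔉
    have hA𝔉 : toWeak '' A ∈ 𝔉 := le_principal_iff.1 h𝔉
    set ev : WeakSpace ℝ C(X, ℝ) → (X → ℝ) :=
      fun f => ⇑((toWeakSpace ℝ C(X, ℝ)).symm f) with hev
    have hevW : ∀ f : C(X, ℝ), ev (toWeak f) = ⇑f := fun f => rfl
    have hsub : toWeak '' A ⊆ ev ⁻¹' ((fun f : C(X, ℝ) => (f : X → ℝ)) '' A) := by
      rintro _ ⟨f, hf, rfl⟩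
      exact ⟨f, hf, (hevW f).symm⟩
    obtain ⟨g, hgA, hglim⟩ := hcomp.ultrafilter_le_nhds (𝔉.map ev)
      (le_principal_iff.2 (Ultrafilter.mem_map.2 (mem_of_superset hA𝔉 hsub)))
    obtain ⟨f₀, hf₀A, hf₀g⟩ := hgA
    subst hf₀g
    refine ⟨toWeak f₀, ⟨f₀, hf₀A, rfl⟩, ?_⟩
    have hinj : Function.Injective ⇑(topDualPairing ℝ (C(X, ℝ))).flip :=
      separatingDual_iff_injective.mp inferInstance
    have key : ∀ φ : C(X, ℝ) →L[ℝ] ℝ,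
        Tendsto (fun w : WeakSpace ℝ C(X, ℝ) => φ ((toWeakSpace ℝ (C(X, ℝ))).symm w)) ↑𝔉
          (𝓝 (φ f₀)) := by
      intro φ
      set r' : ℝ := max r 0 with hr'
      have hr'0 : 0 ≤ r' := le_max_right _ _
      have hnorm : ∀ f ∈ A, |φ f| ≤ ‖φ‖ * r' := by
        intro f hf
        calc |φ f| ≤ ‖φ‖ * ‖f‖ := φ.le_opNorm f
          _ ≤ ‖φ‖ * r' :=
            mul_le_mul_of_nonneg_left (le_trans (hr f hf) (le_max_left _ _)) (norm_nonneg φ)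
      set Φ : WeakSpace ℝ C(X, ℝ) → ℝ :=
        fun w => φ ((toWeakSpace ℝ (C(X, ℝ))).symm w) with hΦ
      have hΦW : ∀ f : C(X, ℝ), Φ (toWeak f) = φ f := fun f => rfl
      have hmemIcc : toWeak '' A ⊆ Φ ⁻¹' (Set.Icc (-(‖φ‖ * r')) (‖φ‖ * r')) := by
        rintro _ ⟨f, hf, rfl⟩
        rw [Set.mem_preimage, hΦW]
        exact abs_le.1 (hnorm f hf)
      obtain ⟨c, hcmem, hclim⟩ :=
        (isCompact_Icc (a := -(‖φ‖ * r')) (b := ‖φ‖ * r')).ultrafilter_le_nhds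
          (𝔉.map Φ) (le_principal_iff.2 (Ultrafilter.mem_map.2 (mem_of_superset hA𝔉 hmemIcc)))
      suffices hc : c = φ f₀ by
        rw [← hc]
        have := hclim
        rwa [Ultrafilter.coe_map] at this
      by_contra hne
      have h3 : 0 < |c - φ f₀| := abs_pos.2 (sub_ne_zero.2 hne)
      set ε : ℝ := |c - φ f₀| / 3 with hε
      have hε0 : 0 < ε := by rw [hε]; linarith
      set S : Set C(X, ℝ) := {f | f ∈ A ∧ |φ f - c| ≤ ε} with hSdef
      have hSapprox : ∀ (E : Finset X) (δ : ℝ), 0 < δ →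
          ∃ f, f ∈ S ∧ ∀ x ∈ E, |f x - f₀ x| < δ := by
        intro E δ hδ
        have hT2 : Φ ⁻¹' {t : ℝ | |t - c| ≤ ε} ∈ 𝔉 := by
          have hball : {t : ℝ | |t - c| ≤ ε} ∈ 𝓝 c := by
            have := Metric.closedBall_mem_nhds c hε0
            simpa [Metric.closedBall, Real.dist_eq] using this
          exact Ultrafilter.mem_map.1 (hclim hball)
        have hT3mem : {u : X → ℝ | ∀ x ∈ E, |u x - f₀ x| < δ} ∈ 𝓝 (⇑f₀ : X → ℝ) := by
          refine IsOpen.mem_nhds ?_ ?_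
          · have hint : {u : X → ℝ | ∀ x ∈ E, |u x - f₀ x| < δ}
                = ⋂ x ∈ E, {u : X → ℝ | |u x - f₀ x| < δ} := by
              ext u; simp
            rw [hint]
            exact isOpen_biInter_finset fun x _ =>
              isOpen_lt ((continuous_apply x).sub continuous_const).abs continuous_const
          · intro x _
            simpa using hδ
        have hT3 : ev ⁻¹' {u : X → ℝ | ∀ x ∈ E, |u x - f₀ x| < δ} ∈ 𝔉 :=
          Ultrafilter.mem_map.1 (hglim hT3mem)
        have hT : (toWeak '' A) ∩ (Φ ⁻¹' {t : ℝ | |t - c| ≤ ε}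
            ∩ ev ⁻¹' {u : X → ℝ | ∀ x ∈ E, |u x - f₀ x| < δ}) ∈ 𝔉 :=
          inter_mem hA𝔉 (inter_mem hT2 hT3)
        obtain ⟨w, hw1, hw2, hw3⟩ := 𝔉.nonempty_of_mem hT
        obtain ⟨f, hfA, rfl⟩ := hw1
        refine ⟨f, ⟨hfA, by simpa [hΦW] using hw2⟩, fun x hx => ?_⟩
        have hw3' : (⇑f : X → ℝ) ∈ {u : X → ℝ | ∀ x ∈ E, |u x - f₀ x| < δ} := hw3
        exact hw3' x hx
      obtain ⟨F, D, hF0, hFS, hDconv, hDdense⟩ := Groth.exists_approx_seq S f₀ hSapprox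
      have hFA : ∀ k, F k ∈ A := by
        intro k
        cases k with
        | zero => rw [hF0]; exact hf₀A
        | succ k => exact (hFS k).1
      have hconv : Tendsto (fun k => (⇑(F k) : X → ℝ)) atTop (𝓝 (⇑f₀ : X → ℝ)) := by
        refine hcomp.tendsto_nhds_of_unique_mapClusterPt
          (Eventually.of_forall fun k => ⟨F k, hFA k, rfl⟩) ?_
        rintro z ⟨G, hGA, rfl⟩ hclus
        have hΨc : Continuous (fun x : X => fun k : ℕ => F k x) :=
          continuous_pi fun k => (F k).continuous
        have hfib : ∀ x y : X, (fun k : ℕ => F k x) = (fun k : ℕ => F k y) →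
            ∀ k, F k x = F k y := fun x y hxy k => congrFun hxy k
        have hGfib : ∀ x y : X, (fun k : ℕ => F k x) = (fun k : ℕ => F k y) → G x = G y := by
          intro x y hxy
          have hpair : MapClusterPt (G x, G y) atTop
              ((fun u : X → ℝ => (u x, u y)) ∘ fun k => (⇑(F k) : X → ℝ)) :=
            hclus.continuousAt_comp
              (Continuous.continuousAt ((continuous_apply x).prodMk (continuous_apply y)))
          have hmemdiag : ∀ k, ((fun u : X → ℝ => (u x, u y)) ∘
              fun k => (⇑(F k) : X → ℝ)) k ∈ Set.diagonal ℝ := by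
            intro k
            simp only [Function.comp_apply, Set.mem_diagonal_iff]
            exact hfib x y hxy k
          have hdiag := Groth.mapClusterPt_mem_of_closed hpair hmemdiag isClosed_diagonal
          exact hdiag
        have hf₀fib : ∀ x y : X, (fun k : ℕ => F k x) = (fun k : ℕ => F k y) → f₀ x = f₀ y := by
          intro x y hxy
          have := hfib x y hxy 0
          rwa [hF0] at this
        have hDcl : ∀ x : X,
            (fun k : ℕ => F k x) ∈ closure ((fun x : X => fun k : ℕ => F k x) '' D) := by
          intro x
          have hchoice : ∀ n : ℕ, ∃ d ∈ D, ∀ i ≤ n, |F i d - F i x| < 1 / (n + 1) :=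
            fun n => hDdense x n (1 / (n + 1)) (by positivity)
          choose dn hdnD hdn using hchoice
          have htend : Tendsto (fun n => (fun k : ℕ => F k (dn n))) atTop
              (𝓝 (fun k : ℕ => F k x)) := by
            rw [tendsto_pi_nhds]
            intro k
            rw [Metric.tendsto_atTop]
            intro ε' hε'
            refine ⟨max k ⌈1 / ε'⌉₊ + 1, fun n hn => ?_⟩
            have hk : k ≤ n := by omega
            have h1 := hdn n k hk
            have h2 : 1 / ((n : ℝ) + 1) ≤ ε' := by
              have hceil : (1 : ℝ) / ε' ≤ ⌈1 / ε'⌉₊ := Nat.le_ceil _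
              have hnge : (⌈1 / ε'⌉₊ : ℝ) + 1 ≤ (n : ℝ) + 1 := by
                have : ⌈1 / ε'⌉₊ ≤ n := by omega
                have := (Nat.cast_le (α := ℝ)).2 this
                linarith
              have hgt : (1 : ℝ) / ε' < (n : ℝ) + 1 := by linarith
              rw [div_le_iff₀ (by positivity)]
              rw [div_lt_iff₀ hε'] at hgt
              nlinarith
            rw [Real.dist_eq]
            calc |F k (dn n) - F k x| < 1 / ((n : ℝ) + 1) := by exact_mod_cast h1
              _ ≤ ε' := h2
          exact mem_closure_of_tendsto htend
            (Eventually.of_forall fun n => Set.mem_image_of_mem _ (hdnD n))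
        have heqD : ∀ d ∈ D, G d = f₀ d := by
          intro d hd
          have hcd : MapClusterPt (G d) atTop
              ((fun u : X → ℝ => u d) ∘ fun k => (⇑(F k) : X → ℝ)) :=
            hclus.continuousAt_comp (continuous_apply d).continuousAt
          have hlim : Tendsto (fun k => F k d) atTop (𝓝 (f₀ d)) := hDconv d hd
          have hcl : ClusterPt (G d) (𝓝 (f₀ d)) := hcd.clusterPt.mono hlim
          exact eq_of_nhds_neBot hcl
        funext x
        exact Groth.eq_of_fiber_dense hΨc hGfib hf₀fib hDcl heqD x
      have hpt : ∀ x, Tendsto (fun k => F k x) atTop (𝓝 (f₀ x)) := by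
        rw [tendsto_pi_nhds] at hconv
        exact hconv
      have hφF : Tendsto (fun k => φ (F k)) atTop (𝓝 (φ f₀)) :=
        Groth.tendsto_apply_of_pointwise φ F f₀ r'
          (fun k => le_trans (hr _ (hFA k)) (le_max_left _ _))
          (le_trans (hr _ hf₀A) (le_max_left _ _)) hpt
      have hφF' : Tendsto (fun k => φ (F (k + 1))) atTop (𝓝 (φ f₀)) :=
        hφF.comp (tendsto_add_atTop_nat 1)
      have hboundS : ∀ k, |φ (F (k + 1)) - c| ≤ ε := fun k => (hFS k).2
      have hlimle : |φ f₀ - c| ≤ ε := by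
        have hcont : Tendsto (fun k => |φ (F (k + 1)) - c|) atTop (𝓝 |φ f₀ - c|) :=
          (hφF'.sub_const c).abs
        exact le_of_tendsto hcont (Eventually.of_forall hboundS)
      have hfin : |c - φ f₀| ≤ ε := by rwa [abs_sub_comm] at hlimle
      rw [hε] at hfin
      linarith
    have hfinal : Tendsto (fun w : WeakSpace ℝ C(X, ℝ) => w) ↑𝔉 (𝓝 (toWeak f₀)) := by
      refine (WeakBilin.tendsto_iff_forall_eval_tendsto (topDualPairing ℝ C(X, ℝ)).flip hinj
        (f := fun w : WeakSpace ℝ C(X, ℝ) => w) (l := ↑𝔉) (x := toWeak f₀)).2 ?_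
      intro φ
      exact key φ
    rwa [show (fun w : WeakSpace ℝ C(X, ℝ) => w) = id from rfl, Filter.tendsto_id'] at hfinal
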